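/- Necessity of jump exhaustion for pointwise convergence: if F : [0,T] → ℝ^d is càdlàg with a jump at t ∈ (0,T] (i.e., F_{t−} ≠ F_t), and P^n are partitions with |P^n| → 0 such that t does not belong to all but finitely many of the P^n, then the piecewise constant approximations F^n along P^n do not converge to F at the point t. -/
import Mathlib


open scoped ENNReal Classical
open Filter MeasureTheory ProbabilityTheory

noncomputable section

/-- The `p`-variation of a path `X` over `[0,T]`, as an extended nonnegative real:
`(sup over partitions of Σ ‖increment‖^p)^(1/p)`. -/
def epVar {E : Type*} [NormedAddCommGroup E] (X : ℝ → E) (p T : ℝ) : ℝ≥0∞ :=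
  (⨆ (n : ℕ) (t : ℕ → ℝ) (_ : Monotone t) (_ : t 0 = 0) (_ : t n = T),
    ∑ i ∈ Finset.range n, ENNReal.ofReal (‖X (t (i + 1)) - X (t i)‖ ^ p)) ^ (1 / p)

/-- The `r`-variation of a two-parameter function `A` over `[0,T]`. -/
def epVar2 {E : Type*} [NormedAddCommGroup E] (A : ℝ → ℝ → E) (r T : ℝ) : ℝ≥0∞ :=
  (⨆ (n : ℕ) (t : ℕ → ℝ) (_ : Monotone t) (_ : t 0 = 0) (_ : t n = T),
    ∑ i ∈ Finset.range n, ENNReal.ofReal (‖A (t i) (t (i + 1))‖ ^ r)) ^ (1 / r)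

/-- Piecewise constant approximation of `X` along the partition `t 0 ≤ t 1 ≤ ... ≤ t N`. -/
def pcApprox {E : Type*} (X : ℝ → E) (N : ℕ) (t : ℕ → ℝ) (s : ℝ) : E :=
  X (t (Nat.findGreatest (fun k => t k ≤ s) N))

/-- Tensor (outer) product of two Euclidean vectors, with the Frobenius (Euclidean) norm. -/
def tp2 {d e : ℕ} (v : EuclideanSpace ℝ (Fin d)) (w : EuclideanSpace ℝ (Fin e)) :
    EuclideanSpace ℝ (Fin d × Fin e) :=
  (WithLp.equiv 2 (Fin d × Fin e → ℝ)).symm (fun q => v q.1 * w q.2)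

def tp {d : ℕ} (v w : EuclideanSpace ℝ (Fin d)) : EuclideanSpace ℝ (Fin d × Fin d) :=
  tp2 v w

/-- Clamping of `x` into the interval `[s,u]`. -/
def clamp (s u x : ℝ) : ℝ := max s (min x u)

/-- The second-level lift `𝕏ⁿ_{s,u} = ∫_s^u (Xⁿ_r − Xⁿ_s) ⊗ dXⁿ_r` of a path `Xn` which is
piecewise constant along the partition `t`, written as a left-point Riemann-Stieltjes sum. -/
def pcLift {d : ℕ} (N : ℕ) (Xn : ℝ → EuclideanSpace ℝ (Fin d)) (t : ℕ → ℝ) (s u : ℝ) :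
    EuclideanSpace ℝ (Fin d × Fin d) :=
  ∑ i ∈ Finset.range N,
    tp (Xn (clamp s u (t i)) - Xn s) (Xn (clamp s u (t (i + 1))) - Xn (clamp s u (t i)))

/-- The left-point Riemann sum `∫_0^u Xⁿ_r ⊗ dX_r = Σ_k X_{t_k} ⊗ (X_{t_{k+1}∧u} − X_{t_k∧u})`. -/
def riemannSum {d : ℕ} (N : ℕ) (X : ℝ → EuclideanSpace ℝ (Fin d)) (t : ℕ → ℝ) (u : ℝ) :
    EuclideanSpace ℝ (Fin d × Fin d) :=
  ∑ k ∈ Finset.range N, tp (X (t k)) (X (min (t (k + 1)) u) - X (min (t k) u))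

/-- The left-point Riemann sum `∫_s^u Xⁿ_{s,r} ⊗ dX_r`. -/
def mixedInt {d : ℕ} (N : ℕ) (X : ℝ → EuclideanSpace ℝ (Fin d)) (t : ℕ → ℝ) (s u : ℝ) :
    EuclideanSpace ℝ (Fin d × Fin d) :=
  ∑ i ∈ Finset.range N,
    tp (pcApprox X N t (clamp s u (t i)) - pcApprox X N t s)
      (X (clamp s u (t (i + 1))) - X (clamp s u (t i)))

/-- A control function on the simplex `Δ_T`: nonnegative and superadditive. -/
def IsControl (T : ℝ) (w : ℝ → ℝ → ℝ) : Prop :=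
  (∀ s t, 0 ≤ s → s ≤ t → t ≤ T → 0 ≤ w s t) ∧
  (∀ s u t, 0 ≤ s → s ≤ u → u ≤ t → t ≤ T → w s u + w u t ≤ w s t)

/-- Property (RIE) for a path `X` relative to `p ∈ (2,3)` and a sequence of partitions
`t n 0 ≤ ... ≤ t n (N n)` of `[0,T]` with vanishing mesh. -/
structure PropertyRIE {d : ℕ} (p T : ℝ) (X : ℝ → EuclideanSpace ℝ (Fin d))
    (N : ℕ → ℕ) (t : ℕ → ℕ → ℝ) : Prop where
  mono : ∀ n, Monotone (t n)
  zero : ∀ n, t n 0 = 0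
  top : ∀ n, t n (N n) = T
  mesh : ∀ ε > 0, ∃ m, ∀ n ≥ m, ∀ i < N n, t n (i + 1) - t n i < ε
  unif : TendstoUniformlyOn (fun n s => pcApprox X (N n) (t n) s) X atTop (Set.Icc 0 T)
  riemann : ∃ I : ℝ → EuclideanSpace ℝ (Fin d × Fin d),
    TendstoUniformlyOn (fun n u => riemannSum (N n) X (t n) u) I atTop (Set.Icc 0 T)
  control : ∃ w : ℝ → ℝ → ℝ, IsControl T w ∧
    (∀ s u, 0 ≤ s → s ≤ u → u ≤ T → ‖X u - X s‖ ^ p ≤ w s u) ∧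
    (∀ n, ∀ k ℓ : ℕ, k < ℓ → ℓ ≤ N n →
      ‖riemannSum (N n) X (t n) (t n ℓ) - riemannSum (N n) X (t n) (t n k) -
          tp (X (t n k)) (X (t n ℓ) - X (t n k))‖ ^ (p / 2) ≤ w (t n k) (t n ℓ))

/-- if `F` has a jump at `s` and `s` does not eventually belong to all the
partitions, then the piecewise constant approximations do not converge to `F` at `s`. -/
theorem jump_exhaustion_necessary {E : Type*} [NormedAddCommGroup E] (T : ℝ) (hT : 0 < T)
    (F : ℝ → E)
    (hrc : ∀ s ∈ Set.Ico (0 : ℝ) T, ContinuousWithinAt F (Set.Ici s) s)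
    (hll : ∀ s ∈ Set.Ioc (0 : ℝ) T, ∃ L : E, Tendsto F (nhdsWithin s (Set.Iio s)) (nhds L))
    (N : ℕ → ℕ) (t : ℕ → ℕ → ℝ)
    (hmono : ∀ n, Monotone (t n)) (h0 : ∀ n, t n 0 = 0) (htop : ∀ n, t n (N n) = T)
    (hmesh : ∀ ε > 0, ∃ m, ∀ n ≥ m, ∀ i < N n, t n (i + 1) - t n i < ε)
    (s : ℝ) (hs : s ∈ Set.Ioc (0 : ℝ) T)
    (hjump : ¬ Tendsto F (nhdsWithin s (Set.Iio s)) (nhds (F s)))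
    (hnot : ¬ ∃ m, ∀ n ≥ m, ∃ i ≤ N n, t n i = s) :
    ¬ Tendsto (fun n => pcApprox F (N n) (t n) s) atTop (nhds (F s)) := by
  intro h
  obtain ⟨L, hL⟩ := hll s hs
  apply hjump
  have hLs : L = F s := by
    apply eq_of_forall_dist_le
    intro δ hδ
    obtain ⟨η, hη, hLnear⟩ := (Metric.tendsto_nhdsWithin_nhds.mp hL) (δ / 2) (by positivity)
    obtain ⟨m1, hm1⟩ := (Metric.tendsto_atTop.mp h) (δ / 2) (by positivity)
    obtain ⟨m2, hm2⟩ := hmesh η hη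
    push_neg at hnot
    obtain ⟨n, hn, hmiss⟩ := hnot (max m1 m2)
    have hn1 : m1 ≤ n := le_trans (le_max_left _ _) hn
    have hn2 : m2 ≤ n := le_trans (le_max_right _ _) hn
    set k := Nat.findGreatest (fun k => t n k ≤ s) (N n) with hk
    have hkN : k ≤ N n := Nat.findGreatest_le _
    have hks : t n k ≤ s :=
      Nat.findGreatest_spec (P := fun k => t n k ≤ s) (Nat.zero_le _)
        (by simpa [h0 n] using hs.1.le)
    have hkne : t n k ≠ s := hmiss k hkN
    have hklt : t n k < s := lt_of_le_of_ne hks hkne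
    have hkNlt : k < N n := by
      rcases lt_or_eq_of_le hkN with h' | h'
      · exact h'
      · exfalso
        have : t n k = T := by rw [h']; exact htop n
        exact absurd (this ▸ hklt) (not_lt.mpr hs.2)
    have hsk1 : s < t n (k + 1) := by
      by_contra hle
      push_neg at hle
      exact absurd (Nat.findGreatest_is_greatest (P := fun k => t n k ≤ s)
        (Nat.lt_succ_self k) hkNlt) (not_not.mpr hle)
    have hmesh' : t n (k + 1) - t n k < η := hm2 n hn2 k hkNlt
    have hnear : dist (t n k) s < η := by
      rw [Real.dist_eq, abs_of_nonpos (by linarith)]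
      linarith
    have hd1 : dist (F (t n k)) L < δ / 2 := hLnear hklt hnear
    have hd2 : dist (F (t n k)) (F s) < δ / 2 := by
      have := hm1 n hn1
      rwa [pcApprox] at this
    calc dist L (F s) ≤ dist L (F (t n k)) + dist (F (t n k)) (F s) := dist_triangle _ _ _
      _ ≤ δ / 2 + δ / 2 := by rw [dist_comm L]; exact add_le_add hd1.le hd2.le
      _ = δ := by ring
  rwa [hLs] at hL
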